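/- For ξ < 0 the Lagrangian map (q,r) ↦ (x,z) with x = q - (1/k)e^{k r'} sin(kq'), z = r + (1/k)e^{kr'} cos(kq') (where r' = r - m(s), q' = q - ct at fixed s, t, shifting labels) is injective on each region where k(r - m(s)) < 0. -/

import Mathlib

open Real

/-- Mean value estimate for the complex exponential on a left half-plane. -/
lemma exp_lip (c : ℝ) {u v : ℂ} (hu : u.re ≤ c) (hv : v.re ≤ c) :
    ‖Complex.exp u - Complex.exp v‖ ≤ Real.exp c * ‖u - v‖ := by
  have := Convex.norm_image_sub_le_of_norm_hasFDerivWithin_le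
    (f := Complex.exp)
    (f' := fun z => ContinuousLinearMap.smulRight (1 : ℂ →L[ℂ] ℂ) (Complex.exp z))
    (s := {z : ℂ | z.re ≤ c})
    (fun x _ => (Complex.hasDerivAt_exp x).hasFDerivAt.hasFDerivWithinAt)
    (fun x hx => by
      rw [ContinuousLinearMap.norm_smulRight_apply, norm_one, one_mul,
        Complex.norm_exp]
      exact Real.exp_le_exp.2 hx)
    (convex_halfSpace_re_le c) hv hu
  simpa using this

/-- the Gerstner-type map is injective on the region r < μ. -/
theorem gerstner_map_injective
    (k μ : ℝ) (hk : 0 < k)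
    (G : ℝ × ℝ → ℝ × ℝ)
    (hG : ∀ p : ℝ × ℝ, G p =
      (p.1 - (1 / k) * exp (k * (p.2 - μ)) * sin (k * p.1),
       p.2 + (1 / k) * exp (k * (p.2 - μ)) * cos (k * p.1))) :
    Set.InjOn G {p : ℝ × ℝ | p.2 < μ} := by
  intro p hp p' hp' heq
  simp only [Set.mem_setOf_eq] at hp hp'
  rw [hG p, hG p'] at heq
  have hk' : k ≠ 0 := ne_of_gt hk
  have eq1 : p.1 - (1 / k) * exp (k * (p.2 - μ)) * sin (k * p.1)
      = p'.1 - (1 / k) * exp (k * (p'.2 - μ)) * sin (k * p'.1) := congrArg Prod.fst heq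
  have eq2 : p.2 + (1 / k) * exp (k * (p.2 - μ)) * cos (k * p.1)
      = p'.2 + (1 / k) * exp (k * (p'.2 - μ)) * cos (k * p'.1) := congrArg Prod.snd heq
  have h1 : exp (k * (p.2 - μ)) = exp (-(k*μ)) * exp (k * p.2) := by
    rw [← Real.exp_add]; ring_nf
  have h2 : exp (k * (p'.2 - μ)) = exp (-(k*μ)) * exp (k * p'.2) := by
    rw [← Real.exp_add]; ring_nf
  rw [h1] at eq1 eq2
  rw [h2] at eq1 eq2
  set w : ℝ × ℝ → ℂ := fun p => (p.1 : ℂ) + (p.2 : ℂ) * Complex.I with hw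
  set u : ℝ × ℝ → ℂ := fun p => (k : ℂ) * Complex.I * (starRingEnd ℂ) (w p) with hu
  set e0 : ℝ := exp (-(k*μ)) with he0
  set E1 : ℝ := exp (k * p.2) with hE1
  set E2 : ℝ := exp (k * p'.2) with hE2
  set c1 : ℝ := cos (k * p.1) with hc1
  set s1 : ℝ := sin (k * p.1) with hs1
  set c2 : ℝ := cos (k * p'.1) with hc2
  set s2 : ℝ := sin (k * p'.1) with hs2
  -- exp (u p) computed explicitly
  have hexp1 : Complex.exp (u p) = (E1 : ℂ) * ((c1 : ℂ) + (s1 : ℂ) * Complex.I) := by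
    have huval : u p = ((k * p.2 : ℝ) : ℂ) + ((k * p.1 : ℝ) : ℂ) * Complex.I := by
      simp only [hu, hw, map_add, map_mul, Complex.conj_I, Complex.conj_ofReal]
      push_cast
      ring_nf
      linear_combination (-(k:ℂ) * p.2) * Complex.I_sq
    rw [huval, Complex.exp_add, Complex.exp_mul_I, ← Complex.ofReal_cos, ← Complex.ofReal_sin,
      ← Complex.ofReal_exp, hE1, hc1, hs1]
  have hexp2 : Complex.exp (u p') = (E2 : ℂ) * ((c2 : ℂ) + (s2 : ℂ) * Complex.I) := by
    have huval : u p' = ((k * p'.2 : ℝ) : ℂ) + ((k * p'.1 : ℝ) : ℂ) * Complex.I := by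
      simp only [hu, hw, map_add, map_mul, Complex.conj_I, Complex.conj_ofReal]
      push_cast
      ring_nf
      linear_combination (-(k:ℂ) * p'.2) * Complex.I_sq
    rw [huval, Complex.exp_add, Complex.exp_mul_I, ← Complex.ofReal_cos, ← Complex.ofReal_sin,
      ← Complex.ofReal_exp, hE2, hc2, hs2]
  -- the complex equation
  have key : w p' - w p = ((e0 / k : ℝ) : ℂ) * Complex.I
      * (Complex.exp (u p) - Complex.exp (u p')) := by
    rw [hexp1, hexp2]
    apply Complex.ext
    · simp only [hw, Complex.sub_re, Complex.add_re, Complex.add_im, Complex.mul_re,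
        Complex.mul_im, Complex.I_re, Complex.I_im, Complex.ofReal_re, Complex.ofReal_im,
        Complex.sub_im]
      field_simp at eq1 ⊢
      nlinarith [eq1]
    · simp only [hw, Complex.sub_re, Complex.add_re, Complex.add_im, Complex.mul_re,
        Complex.mul_im, Complex.I_re, Complex.I_im, Complex.ofReal_re, Complex.ofReal_im,
        Complex.sub_im]
      field_simp at eq2 ⊢
      nlinarith [eq2]
  -- norm estimate
  set c : ℝ := k * max p.2 p'.2 with hc
  have hre : ∀ s : ℝ × ℝ, (u s).re = k * s.2 := by
    intro s
    simp [hu, hw, Complex.mul_re, Complex.mul_im]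
  have hup : (u p).re ≤ c := by
    rw [hre]; exact mul_le_mul_of_nonneg_left (le_max_left _ _) hk.le
  have hup' : (u p').re ≤ c := by
    rw [hre]; exact mul_le_mul_of_nonneg_left (le_max_right _ _) hk.le
  have hlip := exp_lip c hup hup'
  have hnu : ‖u p - u p'‖ = k * ‖w p - w p'‖ := by
    have huu : u p - u p' = (k : ℂ) * Complex.I * (starRingEnd ℂ) (w p - w p') := by
      simp only [hu, map_sub]; ring
    rw [huu]
    simp [norm_mul, Complex.norm_real, Complex.norm_conj, ← map_sub, abs_of_pos hk]
  have he0pos : (0:ℝ) < e0 := by rw [he0]; exact Real.exp_pos _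
  have hd : ‖w p' - w p‖ ≤ Real.exp (c - k * μ) * ‖w p' - w p‖ := by
    calc ‖w p' - w p‖
        = (e0 / k) * ‖Complex.exp (u p) - Complex.exp (u p')‖ := by
          rw [key]
          simp [norm_mul, Complex.norm_real, abs_of_pos he0pos, abs_of_pos hk,
            abs_of_pos (div_pos he0pos hk)]
      _ ≤ (e0 / k) * (Real.exp c * ‖u p - u p'‖) := by
          apply mul_le_mul_of_nonneg_left hlip
          positivity
      _ = Real.exp (c - k * μ) * ‖w p - w p'‖ := by
          rw [hnu, show c - k * μ = -(k*μ) + c by ring, Real.exp_add, ← he0]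
          field_simp
      _ = Real.exp (c - k * μ) * ‖w p' - w p‖ := by rw [norm_sub_rev]
  have hclt : Real.exp (c - k * μ) < 1 := by
    rw [Real.exp_lt_one_iff]
    have hmax : max p.2 p'.2 < μ := max_lt hp hp'
    have hcm : c < k * μ := by rw [hc]; exact (mul_lt_mul_iff_right₀ hk).2 hmax
    linarith
  have h0 : ‖w p' - w p‖ = 0 := by
    by_contra h
    have hpos : 0 < ‖w p' - w p‖ := lt_of_le_of_ne (norm_nonneg _) (Ne.symm h)
    nlinarith
  have hwe : w p' = w p := sub_eq_zero.mp (norm_eq_zero.mp h0)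
  have hfst : p.1 = p'.1 := by
    have := congrArg Complex.re hwe
    simpa [hw] using this.symm
  have hsnd : p.2 = p'.2 := by
    have := congrArg Complex.im hwe
    simpa [hw] using this.symm
  exact Prod.ext hfst hsnd
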